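/- For every t ≥ 1 there exists a family G_1, …, G_t of star forests on a common vertex set V such that each G_i has maximum degree at most 3·(t-1)! and the family admits no cooperative coloring, i.e., there do not exist independent sets R_i ⊆ V of G_i (for 1 ≤ i ≤ t) with R_1 ∪ … ∪ R_t = V. -/

import Mathlib

/-- A graph is a star forest if it is acyclic and each connected component contains at most
one vertex of degree greater than 1 (having two distinct neighbors). -/
def IsStarForest {V : Type*} (G : SimpleGraph V) : Prop :=
  G.IsAcyclic ∧ ∀ u v : V, G.Reachable u v →
    (∃ a b, a ≠ b ∧ G.Adj u a ∧ G.Adj u b) →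
    (∃ a b, a ≠ b ∧ G.Adj v a ∧ G.Adj v b) → u = v

namespace CoopStarAux

variable {t : ℕ}

/-- Vertices: duplicate-free lists over `Fin t`. -/
abbrev Vt (t : ℕ) := {l : List (Fin t) // l.Nodup}

/-- `τ` extends `σ`, the first new entry being `i`. -/
def Ext (i : Fin t) (σ τ : Vt t) : Prop := ∃ r, τ.val = σ.val ++ i :: r

lemma Ext.not_mem {i : Fin t} {σ τ : Vt t} (h : Ext i σ τ) : i ∉ σ.val := by
  obtain ⟨r, hr⟩ := h
  have hn := τ.prop
  rw [hr, List.nodup_append] at hn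
  intro hi
  exact hn.2.2 i hi i List.mem_cons_self rfl

lemma Ext.mem {i : Fin t} {σ τ : Vt t} (h : Ext i σ τ) : i ∈ τ.val := by
  obtain ⟨r, hr⟩ := h
  rw [hr]
  simp

lemma Ext.irrefl {i : Fin t} {σ : Vt t} (h : Ext i σ σ) : False := by
  obtain ⟨r, hr⟩ := h
  have := congrArg List.length hr
  simp at this

/-- Helper: uniqueness of the prefix before a given element in a nodup list. -/
lemma prefix_unique {α : Type*} (i : α) : ∀ (l1 l2 r1 r2 : List α),
    l1 ++ i :: r1 = l2 ++ i :: r2 → (l1 ++ i :: r1).Nodup → l1 = l2 := by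
  intro l1
  induction l1 with
  | nil =>
    intro l2 r1 r2 h hn
    cases l2 with
    | nil => rfl
    | cons b l2' =>
      exfalso
      simp only [List.nil_append, List.cons_append] at h hn
      injection h with h1 h2
      rw [List.nodup_cons] at hn
      exact hn.1 (by rw [h2]; simp [← h1])
  | cons a l1' ih =>
    intro l2 r1 r2 h hn
    cases l2 with
    | nil =>
      exfalso
      simp only [List.cons_append, List.nil_append] at h hn
      injection h with h1 h2
      rw [List.nodup_cons] at hn
      exact hn.1 (by rw [h1]; simp)
    | cons b l2' =>
      simp only [List.cons_append] at h hn
      injection h with h1 h2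
      rw [h1, ih l2' r1 r2 h2 (List.nodup_cons.mp hn).2]

lemma Ext.unique {i : Fin t} {σ σ' τ : Vt t} (h : Ext i σ τ) (h' : Ext i σ' τ) : σ = σ' := by
  obtain ⟨r, hr⟩ := h
  obtain ⟨r', hr'⟩ := h'
  apply Subtype.ext
  exact prefix_unique i σ.val σ'.val r r' (by rw [← hr, ← hr']) (by rw [← hr]; exact τ.prop)

/-- The `i`-th star forest. -/
def Gr (i : Fin t) : SimpleGraph (Vt t) where
  Adj σ τ := Ext i σ τ ∨ Ext i τ σ
  symm := ⟨fun _ _ h => Or.symm h⟩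
  loopless := ⟨fun _ h => by rcases h with h | h <;> exact h.irrefl⟩

lemma adj_of_mem {i : Fin t} {v w : Vt t} (h : (Gr i).Adj v w) (hv : i ∈ v.val) :
    Ext i w v := by
  rcases (h : Ext i v w ∨ Ext i w v) with h | h
  · exact absurd hv h.not_mem
  · exact h

lemma adj_of_not_mem {i : Fin t} {v w : Vt t} (h : (Gr i).Adj v w) (hv : i ∉ v.val) :
    Ext i v w := by
  rcases (h : Ext i v w ∨ Ext i w v) with h | h
  · exact h
  · exact absurd h.mem hv

lemma leaf_unique {i : Fin t} {v w w' : Vt t} (hv : i ∈ v.val)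
    (h1 : (Gr i).Adj v w) (h2 : (Gr i).Adj v w') : w = w' :=
  Ext.unique (adj_of_mem h1 hv) (adj_of_mem h2 hv)

open SimpleGraph

lemma exists_last_edge {W : Type*} {G : SimpleGraph W} :
    ∀ {x y : W} (q : G.Walk x y), x ≠ y → ∃ w, G.Adj w y ∧ s(w, y) ∈ q.edges := by
  intro x y q
  induction q with
  | nil => intro h; exact absurd rfl h
  | @cons a b c h r ih =>
    intro _
    by_cases hby : b = c
    · subst hby; exact ⟨a, h, by simp⟩
    · obtain ⟨w, hw, hm⟩ := ih hby
      exact ⟨w, hw, by simp [hm]⟩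

lemma gr_acyclic (i : Fin t) : (Gr i).IsAcyclic := by
  intro v p hp
  cases p with
  | nil => exact hp.ne_nil rfl
  | @cons _ z _ hadj q =>
    have htrail := hp.isCircuit.isTrail.edges_nodup
    rw [Walk.edges_cons, List.nodup_cons] at htrail
    by_cases hv : i ∈ v.val
    · -- v is a leaf: the last edge of q also ends in v with the same neighbor z
      obtain ⟨w, hwv, hmem⟩ := exists_last_edge q (fun h => (Gr i).loopless.irrefl v (h ▸ hadj))
      have hwz : w = z := leaf_unique hv hwv.symm hadj
      subst hwz
      exact htrail.1 (by rwa [Sym2.eq_swap] at hmem)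
    · -- v is a center: z is a leaf, so the second step returns to v
      have hz : i ∈ z.val := (adj_of_not_mem hadj hv).mem
      cases q with
      | nil => exact hv hz
      | @cons _ w _ hadj2 r =>
        have hwv : w = v := leaf_unique hz hadj2 hadj.symm
        subst hwv
        exact htrail.1 (by simp [Sym2.eq_swap])

lemma center_reach (i : Fin t) : ∀ (n : ℕ) {x y : Vt t} (p : (Gr i).Walk x y),
    p.length ≤ n → i ∉ x.val → i ∉ y.val → x = y := by
  intro n
  induction n with
  | zero =>
    intro x y p hl _ _
    exact Walk.eq_of_length_eq_zero (Nat.le_zero.mp hl)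
  | succ n ih =>
    intro x y p hl hx hy
    cases p with
    | nil => rfl
    | @cons _ z _ hadj q =>
      have hz : i ∈ z.val := (adj_of_not_mem hadj hx).mem
      cases q with
      | nil => exact absurd hz hy
      | @cons _ w _ hadj2 r =>
        have hwx : w = x := leaf_unique hz hadj2 hadj.symm
        subst hwx
        refine ih r ?_ hx hy
        simp only [Walk.length_cons] at hl
        omega

theorem gr_starForest (i : Fin t) : IsStarForest (Gr i) := by
  constructor
  · exact gr_acyclic i
  · rintro u v hr ⟨a, b, hab, h1, h2⟩ ⟨c, d, hcd, h3, h4⟩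
    have hu : i ∉ u.val := fun hiu => hab (leaf_unique hiu h1 h2)
    have hv : i ∉ v.val := fun hiv => hcd (leaf_unique hiv h3 h4)
    obtain ⟨p⟩ := hr
    exact center_reach i p.length p le_rfl hu hv

/-! ### Counting -/

lemma sum_descFactorial_le (s : ℕ) :
    (∑ k ∈ Finset.range (s + 1), Nat.descFactorial s k) + 1 ≤ 3 * s.factorial := by
  induction s with
  | zero => simp [Nat.descFactorial]
  | succ s ih =>
    have hrec : ∑ k ∈ Finset.range (s + 2), Nat.descFactorial (s + 1) k
        = 1 + (s + 1) * ∑ k ∈ Finset.range (s + 1), Nat.descFactorial s k := by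
      rw [Finset.sum_range_succ']
      simp only [Nat.succ_descFactorial_succ, Nat.descFactorial_zero]
      rw [← Finset.mul_sum]
      omega
    rcases Nat.eq_zero_or_pos s with h0 | hpos
    · subst h0; simp [Finset.sum_range_succ, Nat.descFactorial]
    · set B := ∑ k ∈ Finset.range (s + 1), Nat.descFactorial s k with hB
      have h3 : (s + 1) * (B + 1) ≤ (s + 1) * (3 * s.factorial) :=
        Nat.mul_le_mul_left _ ih
      have h4 : (s + 1) * (3 * s.factorial) = 3 * (s + 1).factorial := by
        rw [Nat.factorial_succ]; ring
      rw [hrec]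
      calc 1 + (s + 1) * B + 1 = (s + 1) * B + 2 := by ring
        _ ≤ (s + 1) * B + (s + 1) := by omega
        _ = (s + 1) * (B + 1) := by ring
        _ ≤ (s + 1) * (3 * s.factorial) := h3
        _ = 3 * (s + 1).factorial := h4

lemma card_nodup_le (β : Type*) [Fintype β] [DecidableEq β] :
    Nat.card {l : List β // l.Nodup} ≤ 3 * (Fintype.card β).factorial := by
  classical
  set s := Fintype.card β with hs
  have hsur : Function.Surjective (fun p : Σ k : Fin (s + 1), (Fin k.val ↪ β) =>
      (⟨List.ofFn p.2, List.nodup_ofFn.mpr p.2.injective⟩ : {l : List β // l.Nodup})) := by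
    rintro ⟨l, hl⟩
    refine ⟨⟨⟨l.length, Nat.lt_succ_of_le hl.length_le_card⟩,
      ⟨l.get, List.nodup_iff_injective_get.mp hl⟩⟩, ?_⟩
    exact Subtype.ext (List.ofFn_get l)
  have h1 := Nat.card_le_card_of_surjective _ hsur
  have h2 : Nat.card (Σ k : Fin (s + 1), (Fin k.val ↪ β))
      = ∑ k ∈ Finset.range (s + 1), Nat.descFactorial s k := by
    rw [Nat.card_eq_fintype_card, Fintype.card_sigma, ← Fin.sum_univ_eq_sum_range]
    congr 1
    funext k
    rw [Fintype.card_embedding_eq, Fintype.card_fin]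
  have := sum_descFactorial_le s
  omega

lemma drop_eq {β : Type*} (l r : List β) (x : β) :
    (l ++ x :: r).drop (l.length + 1) = r := by
  have : l ++ x :: r = (l ++ [x]) ++ r := by simp
  rw [this, List.drop_left']
  simp

lemma degree_le (i : Fin t) (v : Vt t) :
    Set.ncard {w | (Gr i).Adj v w} ≤ 3 * Nat.factorial (t - 1) := by
  classical
  rw [← Nat.card_coe_set_eq]
  by_cases hv : i ∈ v.val
  · -- leaf: at most one neighbor
    have h1 : Nat.card {w | (Gr i).Adj v w} ≤ 1 := by
      have h := Nat.card_le_card_of_injective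
        (fun _ : {w : Vt t // (Gr i).Adj v w} => (PUnit.unit : PUnit))
        (fun a b _ => Subtype.ext (leaf_unique hv a.prop b.prop))
      rwa [show Nat.card PUnit.{1} = 1 from Nat.card_unique] at h
    have := Nat.factorial_pos (t - 1)
    omega
  · -- center: inject neighbors into nodup lists over Fin t \ {i}
    have hkey : ∀ w : {w : Vt t // (Gr i).Adj v w},
        (w.val.val : List (Fin t)) = v.val ++ i :: (w.val.val.drop (v.val.length + 1)) := by
      rintro ⟨w, hw⟩
      obtain ⟨r, hr⟩ := adj_of_not_mem hw hv
      simp only []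
      rw [hr, drop_eq]
    have hnotmem : ∀ w : {w : Vt t // (Gr i).Adj v w},
        ∀ x ∈ w.val.val.drop (v.val.length + 1), x ≠ i := by
      intro w x hx hxe
      have hn := w.val.prop
      rw [hkey w, List.nodup_append] at hn
      have : i ∈ i :: (w.val.val.drop (v.val.length + 1)) := by
        exact List.mem_cons_of_mem _ (hxe ▸ hx)
      exact (List.nodup_cons.mp hn.2.1).1 (hxe ▸ hx)
    let f : {w : Vt t // (Gr i).Adj v w} → {l : List {x : Fin t // x ≠ i} // l.Nodup} := fun w =>
      ⟨(w.val.val.drop (v.val.length + 1)).pmap (fun x hx => (⟨x, hx⟩ : {x : Fin t // x ≠ i})) (hnotmem w),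
       by
        apply List.Nodup.pmap
        · intro a _ b _ hab
          exact congrArg Subtype.val hab
        · have hn := w.val.prop
          rw [hkey w, List.nodup_append] at hn
          exact (List.nodup_cons.mp hn.2.1).2⟩
    have hinj : Function.Injective f := by
      intro a b hab
      have h1 : a.val.val.drop (v.val.length + 1) = b.val.val.drop (v.val.length + 1) := by
        have := congrArg (fun l => l.val.map Subtype.val) hab
        simpa [f, List.map_pmap] using this
      apply Subtype.ext
      apply Subtype.ext
      rw [hkey a, hkey b, h1]
    have h2 := Nat.card_le_card_of_injective f hinj
    have h3 := card_nodup_le {x : Fin t // x ≠ i}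
    have h4 : Fintype.card {x : Fin t // x ≠ i} = t - 1 := by
      have h5 := Fintype.card_subtype_compl (fun x : Fin t => x = i)
      rw [Fintype.card_subtype_eq, Fintype.card_fin] at h5
      exact h5
    rw [h4] at h3
    exact h2.trans h3

/-! ### No cooperative coloring -/

theorem no_coop : ¬ ∃ R : Fin t → Set (Vt t),
    (∀ i, ∀ u ∈ R i, ∀ v ∈ R i, ¬ (Gr i).Adj u v) ∧ (⋃ i, R i) = Set.univ := by
  rintro ⟨R, hind, hcov⟩
  have key : ∀ k : ℕ, ∃ σ : Vt t, σ.val.length = k ∧ ∀ (j : ℕ) (hj : j < σ.val.length),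
      (⟨σ.val.take j, σ.prop.sublist (List.take_sublist j σ.val)⟩ : Vt t)
        ∈ R (σ.val.get ⟨j, hj⟩) := by
    intro k
    induction k with
    | zero => exact ⟨⟨[], List.nodup_nil⟩, rfl, fun j hj => absurd hj (by simp)⟩
    | succ k ih =>
      obtain ⟨σ, hlen, hgood⟩ := ih
      have hσ : σ ∈ ⋃ i, R i := hcov ▸ Set.mem_univ σ
      obtain ⟨m, hm⟩ := Set.mem_iUnion.mp hσ
      have hmnot : m ∉ σ.val := by
        intro hmem
        obtain ⟨⟨j, hj⟩, hget⟩ := List.mem_iff_get.mp hmem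
        have hadj : (Gr m).Adj
            (⟨σ.val.take j, σ.prop.sublist (List.take_sublist j σ.val)⟩ : Vt t) σ :=
          show Ext m _ σ ∨ Ext m σ _ from Or.inl ⟨σ.val.drop (j + 1), by
            conv_lhs => rw [← List.take_append_drop j σ.val]
            have hg : σ.val[j] = m := hget
            rw [← List.getElem_cons_drop hj, hg]⟩
        have h1 := hgood j hj
        rw [hget] at h1
        exact hind m _ h1 σ hm hadj
      have hnodup : (σ.val ++ [m]).Nodup := by
        rw [List.nodup_append]
        exact ⟨σ.prop, List.nodup_singleton m, by
            intro a ha b hb hab; rw [List.mem_singleton] at hb; rw [hab, hb] at ha; exact hmnot ha⟩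
      refine ⟨⟨σ.val ++ [m], hnodup⟩, by simp [hlen], ?_⟩
      intro j hj
      simp only [List.length_append, List.length_singleton] at hj
      by_cases hjk : j < σ.val.length
      · have e1 : (σ.val ++ [m]).take j = σ.val.take j :=
          List.take_append_of_le_length (le_of_lt hjk)
        have e2 : (σ.val ++ [m]).get ⟨j, by simp; omega⟩ = σ.val.get ⟨j, hjk⟩ := by
          simp [List.getElem_append, hjk]
        have h1 := hgood j hjk
        convert h1 using 2 <;>
          first
            | exact Subtype.ext e1
            | exact e2
            | rfl
      · have hjeq : j = σ.val.length := by omega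
        subst hjeq
        have e1 : (σ.val ++ [m]).take σ.val.length = σ.val := List.take_left
        have e2 : (σ.val ++ [m]).get ⟨σ.val.length, by simp⟩ = m := by
          simp [List.getElem_append]
        convert hm using 2 <;>
          first
            | exact Subtype.ext e1
            | exact e2
            | rfl
  obtain ⟨σ, hlen, -⟩ := key (t + 1)
  have hle := σ.prop.length_le_card
  rw [Fintype.card_fin] at hle
  omega

end CoopStarAux

theorem stmt3 : ∀ t : ℕ, 1 ≤ t →
    ∃ (V : Type) (_ : Fintype V) (G : Fin t → SimpleGraph V),
      (∀ i, IsStarForest (G i)) ∧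
      (∀ i (v : V), Set.ncard {w | (G i).Adj v w} ≤ 3 * Nat.factorial (t - 1)) ∧
      ¬ ∃ R : Fin t → Set V,
        (∀ i, ∀ u ∈ R i, ∀ v ∈ R i, ¬ (G i).Adj u v) ∧ (⋃ i, R i) = Set.univ := by
  intro t _
  classical
  exact ⟨CoopStarAux.Vt t, inferInstance, CoopStarAux.Gr,
    fun i => CoopStarAux.gr_starForest i,
    fun i v => CoopStarAux.degree_le i v,
    CoopStarAux.no_coop⟩
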